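/- For monotone Arg: if ξ ∈ ℂ and [a,b] ⊂ ℝ with ξ ∉ [a,b], then the function t ↦ Arg(t − ξ) is monotone on [a,b], and consequently its total variation on [a,b] equals ∠(ξ,[a,b]) = |Arg(a−ξ) − Arg(b−ξ)|. -/

import Mathlib

open Set

/-- Principal argument with the convention `Arg 0 = π`. -/
noncomputable def arg' (z : ℂ) : ℝ := if z = 0 then Real.pi else Complex.arg z

/-- Angle under which the real interval `[a,b]` is seen from `ξ`. -/
noncomputable def ang (ξ : ℂ) (a b : ℝ) : ℝ := |arg' ((a : ℂ) - ξ) - arg' ((b : ℂ) - ξ)|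

private lemma antitone_arccos : Antitone Real.arccos := fun x y h => by
  unfold Real.arccos
  exact sub_le_sub_left (Real.monotone_arcsin h) _

/-- `x ↦ x / √(x² + c²)` is monotone, core case `0 ≤ x`. -/
private lemma aux_core {c x y : ℝ} (hc : c ≠ 0) (hx : 0 ≤ x) (hxy : x ≤ y) :
    x / Real.sqrt (x ^ 2 + c ^ 2) ≤ y / Real.sqrt (y ^ 2 + c ^ 2) := by
  have hc2 : 0 < c ^ 2 := by positivity
  have hA : (0:ℝ) < Real.sqrt (x ^ 2 + c ^ 2) := Real.sqrt_pos.2 (by positivity)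
  have hB : (0:ℝ) < Real.sqrt (y ^ 2 + c ^ 2) := Real.sqrt_pos.2 (by positivity)
  rw [div_le_div_iff₀ hA hB]
  have hy : 0 ≤ y := hx.trans hxy
  have h1 : x * Real.sqrt (y ^ 2 + c ^ 2) = Real.sqrt (x ^ 2 * (y ^ 2 + c ^ 2)) := by
    rw [Real.sqrt_mul (by positivity), Real.sqrt_sq hx]
  have h2 : y * Real.sqrt (x ^ 2 + c ^ 2) = Real.sqrt (y ^ 2 * (x ^ 2 + c ^ 2)) := by
    rw [Real.sqrt_mul (by positivity), Real.sqrt_sq hy]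
  rw [h1, h2]
  apply Real.sqrt_le_sqrt
  nlinarith [sq_nonneg x, sq_nonneg y, mul_self_le_mul_self hx hxy]

private lemma aux_mono {c : ℝ} (hc : c ≠ 0) :
    Monotone (fun x : ℝ => x / Real.sqrt (x ^ 2 + c ^ 2)) := by
  intro x y hxy
  rcases le_total 0 x with hx | hx
  · exact aux_core hc hx hxy
  · rcases le_total y 0 with hy | hy
    · have := aux_core hc (by linarith : (0:ℝ) ≤ -y) (by linarith : -y ≤ -x)
      rw [neg_sq, neg_sq, neg_div, neg_div] at this
      linarith
    · have hA : (0:ℝ) ≤ Real.sqrt (x ^ 2 + c ^ 2) := Real.sqrt_nonneg _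
      have hB : (0:ℝ) ≤ Real.sqrt (y ^ 2 + c ^ 2) := Real.sqrt_nonneg _
      exact le_trans (div_nonpos_iff.2 (Or.inr ⟨hx, hA⟩)) (div_nonneg hy hB)

private lemma eVariationOn_neg (f : ℝ → ℝ) (s : Set ℝ) :
    eVariationOn (fun x => -f x) s = eVariationOn f s := by
  unfold eVariationOn
  congr 1
  funext p
  congr 1
  funext i
  exact edist_neg_neg _ _

private lemma evar_mono {f : ℝ → ℝ} {a b : ℝ} (hab : a ≤ b)
    (hf : MonotoneOn f (Icc a b)) :
    eVariationOn f (Icc a b) = ENNReal.ofReal |f a - f b| := by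
  have ha : a ∈ Icc a b := ⟨le_rfl, hab⟩
  have hb : b ∈ Icc a b := ⟨hab, le_rfl⟩
  apply le_antisymm
  · have := hf.eVariationOn_le ha hb
    rw [inter_self] at this
    rwa [abs_sub_comm, abs_of_nonneg (sub_nonneg.2 (hf ha hb hab))]
  · calc ENNReal.ofReal |f a - f b| = edist (f a) (f b) := by
          rw [edist_dist, Real.dist_eq]
      _ ≤ eVariationOn f (Icc a b) := eVariationOn.edist_le f ha hb

private lemma evar_of_mono_or_anti {f : ℝ → ℝ} {a b : ℝ} (hab : a ≤ b)
    (h : MonotoneOn f (Icc a b) ∨ AntitoneOn f (Icc a b)) :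
    eVariationOn f (Icc a b) = ENNReal.ofReal |f a - f b| := by
  rcases h with h | h
  · exact evar_mono hab h
  · have := evar_mono hab h.neg
    rw [eVariationOn_neg] at this
    rw [this]
    congr 1
    rw [show -f a - -f b = -(f a - f b) by ring, abs_neg]

/-- if `ξ ∉ [a,b]`, then `t ↦ Arg(t-ξ)` is monotone on `[a,b]` and its
total variation on `[a,b]` equals the angle `∠(ξ,[a,b])`. -/
theorem stmt3 (a b : ℝ) (hab : a ≤ b) (ξ : ℂ)
    (hξ : ¬ ∃ x : ℝ, x ∈ Icc a b ∧ ξ = (x : ℂ)) :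
    (MonotoneOn (fun t : ℝ => arg' ((t : ℂ) - ξ)) (Icc a b) ∨
      AntitoneOn (fun t : ℝ => arg' ((t : ℂ) - ξ)) (Icc a b)) ∧
    eVariationOn (fun t : ℝ => arg' ((t : ℂ) - ξ)) (Icc a b) = ENNReal.ofReal (ang ξ a b) := by
  set f : ℝ → ℝ := fun t : ℝ => arg' ((t : ℂ) - ξ) with hfdef
  have key : MonotoneOn f (Icc a b) ∨ AntitoneOn f (Icc a b) := by
    rcases eq_or_ne ξ.im 0 with him | him
    · -- ξ is real, off the interval; f is constant on [a,b]
      have hre : ξ = ((ξ.re : ℝ) : ℂ) := by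
        apply Complex.ext <;> simp [him]
      have hnot : ξ.re ∉ Icc a b := fun hmem => hξ ⟨ξ.re, hmem, hre⟩
      have hconst : ∀ t ∈ Icc a b, f t = f a := by
        intro t ht
        have key : ∀ s : ℝ, s ∈ Icc a b → f s = (if ξ.re < a then 0 else Real.pi) := by
          intro s hs
          have hz : (s : ℂ) - ξ = ((s - ξ.re : ℝ) : ℂ) := by
            conv_lhs => rw [hre]
            push_cast; ring
          rcases lt_or_ge ξ.re a with hlt | hge
          · have hpos : (0:ℝ) < s - ξ.re := by
              have := hs.1; simp only [sub_pos]; linarith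
            simp only [hfdef, hz, if_pos hlt]
            rw [arg', if_neg (Complex.ofReal_ne_zero.2 hpos.ne')]
            exact Complex.arg_ofReal_of_nonneg hpos.le
          · have hgt : b < ξ.re := by
              rcases lt_or_ge b ξ.re with h | h
              · exact h
              · exact absurd ⟨hge, h⟩ hnot
            have hneg : s - ξ.re < 0 := by
              have := hs.2; linarith
            simp only [hfdef, hz, if_neg (not_lt.2 hge)]
            rw [arg', if_neg (Complex.ofReal_ne_zero.2 hneg.ne)]
            exact Complex.arg_ofReal_of_neg hneg
        rw [key t ht, key a ⟨le_rfl, hab⟩]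
      left
      intro x hx y hy _
      rw [hconst x hx, hconst y hy]
    · -- ξ has nonzero imaginary part
      have hz : ∀ t : ℝ, ((t : ℂ) - ξ) ≠ 0 := by
        intro t h
        apply him
        have := congrArg Complex.im h
        simpa using this.symm
      have hzim : ∀ t : ℝ, ((t : ℂ) - ξ).im = -ξ.im := by intro t; simp
      have hzre : ∀ t : ℝ, ((t : ℂ) - ξ).re = t - ξ.re := by intro t; simp
      have habs : ∀ t : ℝ, ‖(t : ℂ) - ξ‖ =
          Real.sqrt ((t - ξ.re) ^ 2 + ξ.im ^ 2) := by
        intro t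
        rw [Complex.norm_def, Complex.normSq_apply, hzim, hzre]
        congr 1; ring
      have hf : ∀ t : ℝ, f t = Complex.arg ((t : ℂ) - ξ) := by
        intro t; simp [hfdef, arg', hz t]
      set u : ℝ → ℝ := fun t => (t - ξ.re) / Real.sqrt ((t - ξ.re) ^ 2 + ξ.im ^ 2) with hu
      have humono : Monotone u := by
        intro x y hxy
        have := aux_mono him (by linarith : x - ξ.re ≤ y - ξ.re)
        simpa [hu] using this
      rcases lt_or_gt_of_ne him with hneg | hpos
      · -- ξ.im < 0, so im (t - ξ) > 0, f t = arccos (u t), antitone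
        right
        intro x hx y hy hxy
        have hax : f x = Real.arccos (u x) := by
          rw [hf, Complex.arg_of_im_pos (by rw [hzim]; linarith), hzre, habs]
        have hay : f y = Real.arccos (u y) := by
          rw [hf, Complex.arg_of_im_pos (by rw [hzim]; linarith), hzre, habs]
        rw [hax, hay]
        exact antitone_arccos (humono hxy)
      · -- ξ.im > 0, so im (t - ξ) < 0, f t = -arccos (u t), monotone
        left
        intro x hx y hy hxy
        have hax : f x = -Real.arccos (u x) := by
          rw [hf, Complex.arg_of_im_neg (by rw [hzim]; linarith), hzre, habs]
        have hay : f y = -Real.arccos (u y) := by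
          rw [hf, Complex.arg_of_im_neg (by rw [hzim]; linarith), hzre, habs]
        rw [hax, hay]
        exact neg_le_neg (antitone_arccos (humono hxy))
  refine ⟨key, ?_⟩
  rw [evar_of_mono_or_anti hab key]
  rfl
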